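/- Fix K ≥ 2, h_k > 0, Γ_k > 0, h_{kj} ≥ 0 for j ≠ k, σ² > 0, p̄ > 0, and targets γ*_k with 0 < γ*_k < Γ_k, and let r : (0,∞)^K → (0,∞)^K be defined by r_k(p) = min( p̄ , γ*_k·(Σ_{j≠k} h_{kj} p_j + σ²)/( h_k·(1 − γ*_k/Γ_k) ) ). Then r has at most one fixed point in (0,∞)^K (so the Nash equilibrium power vector of the noncooperative power control game is unique). -/
import Mathlib


open Finset

lemma nash_aux
    (K : ℕ)
    (h Γ : Fin K → ℝ) (hh : ∀ k, 0 < h k) (hΓ : ∀ k, 0 < Γ k)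
    (hc : Fin K → Fin K → ℝ) (hhc : ∀ k j, j ≠ k → 0 ≤ hc k j)
    (σ2 : ℝ) (hσ2 : 0 < σ2)
    (pbar : ℝ) (hpbar : 0 < pbar)
    (γs : Fin K → ℝ) (hγs : ∀ k, 0 < γs k ∧ γs k < Γ k)
    (r : (Fin K → ℝ) → (Fin K → ℝ))
    (hr : ∀ p k, r p k =
      min pbar (γs k * ((∑ j ∈ univ.erase k, hc k j * p j) + σ2) /
        (h k * (1 - γs k / Γ k))))
    (p q : Fin K → ℝ) (hp : ∀ k, 0 < p k) (hq : ∀ k, 0 < q k)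
    (hfp : r p = p) (hfq : r q = q) : ∀ k, q k ≤ p k := by
  by_contra hcon
  push_neg at hcon
  obtain ⟨k1, hk1⟩ := hcon
  obtain ⟨k0, -, hk0⟩ := Finset.exists_max_image univ (fun j => q j / p j) ⟨k1, mem_univ _⟩
  set t := q k0 / p k0 with ht
  have ht1 : 1 < t := lt_of_lt_of_le ((one_lt_div (hp k1)).2 hk1) (hk0 k1 (mem_univ _))
  have hle : ∀ j, q j ≤ t * p j := fun j => by
    have := hk0 j (mem_univ _)
    rw [div_le_iff₀ (hp j)] at this
    linarith [this]
  have hqk0 : q k0 = t * p k0 := by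
    rw [ht, div_mul_cancel₀ _ (hp k0).ne']
  -- positivity of denominator
  have hden : 0 < h k0 * (1 - γs k0 / Γ k0) := by
    have h1 : γs k0 / Γ k0 < 1 := (div_lt_one (hΓ k0)).2 (hγs k0).2
    have := hh k0
    nlinarith
  have hγpos := (hγs k0).1
  -- sums
  set S := fun (x : Fin K → ℝ) => ∑ j ∈ univ.erase k0, hc k0 j * x j with hS
  have hSle : S q ≤ t * S p := by
    rw [hS]
    simp only [Finset.mul_sum]
    apply Finset.sum_le_sum
    intro j hj
    have hjne : j ≠ k0 := (Finset.mem_erase.1 hj).1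
    have hcj := hhc k0 j hjne
    have := hle j
    nlinarith
  have hXlt : γs k0 * (S q + σ2) / (h k0 * (1 - γs k0 / Γ k0)) <
      t * (γs k0 * (S p + σ2) / (h k0 * (1 - γs k0 / Γ k0))) := by
    rw [mul_div_assoc']
    rw [div_lt_div_iff₀ hden hden]
    have hnum : γs k0 * (S q + σ2) < t * (γs k0 * (S p + σ2)) := by
      nlinarith [mul_le_mul_of_nonneg_left hSle hγpos.le,
        mul_lt_mul_of_pos_left (show σ2 < t * σ2 by nlinarith) hγpos]
    nlinarith [mul_lt_mul_of_pos_right hnum hden]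
  have hpk0 : p k0 = min pbar (γs k0 * (S p + σ2) / (h k0 * (1 - γs k0 / Γ k0))) := by
    conv_lhs => rw [← hfp]
    rw [hr]
  have hqk0' : q k0 = min pbar (γs k0 * (S q + σ2) / (h k0 * (1 - γs k0 / Γ k0))) := by
    conv_lhs => rw [← hfq]
    rw [hr]
  have hlt : q k0 < t * p k0 := by
    rw [hqk0', hpk0]
    have hmin : t * min pbar (γs k0 * (S p + σ2) / (h k0 * (1 - γs k0 / Γ k0))) =
        min (t * pbar) (t * (γs k0 * (S p + σ2) / (h k0 * (1 - γs k0 / Γ k0)))) := by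
      rcases le_total pbar (γs k0 * (S p + σ2) / (h k0 * (1 - γs k0 / Γ k0))) with hle'|hle'
      · rw [min_eq_left hle', min_eq_left (by nlinarith)]
      · rw [min_eq_right hle', min_eq_right (by nlinarith)]
    rw [hmin]
    apply lt_min
    · calc min pbar (γs k0 * (S q + σ2) / (h k0 * (1 - γs k0 / Γ k0))) ≤ pbar :=
        min_le_left _ _
      _ < t * pbar := by nlinarith
    · calc min pbar (γs k0 * (S q + σ2) / (h k0 * (1 - γs k0 / Γ k0)))
          ≤ γs k0 * (S q + σ2) / (h k0 * (1 - γs k0 / Γ k0)) := min_le_right _ _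
      _ < t * (γs k0 * (S p + σ2) / (h k0 * (1 - γs k0 / Γ k0))) := hXlt
  rw [hqk0] at hlt
  exact lt_irrefl _ hlt

/-- Fix `K ≥ 2`, `h k > 0`, `Γ k > 0`, `hc k j ≥ 0` for `j ≠ k`, `σ² > 0`,
`p̄ > 0`, and targets `γs k` with `0 < γs k < Γ k`, and let
`r k p = min (p̄, γs k (∑_{j≠k} hc k j * p j + σ²) / (h k (1 − γs k / Γ k)))` be the
best-response map.  Then `r` has at most one fixed point in `(0,∞)^K`, i.e. the Nash
equilibrium power vector of the noncooperative power control game is unique. -/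
theorem nash_equilibrium_unique
    (K : ℕ) (hK : 2 ≤ K)
    (h Γ : Fin K → ℝ) (hh : ∀ k, 0 < h k) (hΓ : ∀ k, 0 < Γ k)
    (hc : Fin K → Fin K → ℝ) (hhc : ∀ k j, j ≠ k → 0 ≤ hc k j)
    (σ2 : ℝ) (hσ2 : 0 < σ2)
    (pbar : ℝ) (hpbar : 0 < pbar)
    (γs : Fin K → ℝ) (hγs : ∀ k, 0 < γs k ∧ γs k < Γ k)
    (r : (Fin K → ℝ) → (Fin K → ℝ))
    (hr : ∀ p k, r p k =
      min pbar (γs k * ((∑ j ∈ univ.erase k, hc k j * p j) + σ2) /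
        (h k * (1 - γs k / Γ k)))) :
    ∀ p q : Fin K → ℝ, (∀ k, 0 < p k) → (∀ k, 0 < q k) →
      r p = p → r q = q → p = q := by
  intro p q hp hq hfp hfq
  funext k
  exact le_antisymm
    (nash_aux K h Γ hh hΓ hc hhc σ2 hσ2 pbar hpbar γs hγs r hr q p hq hp hfq hfp k)
    (nash_aux K h Γ hh hΓ hc hhc σ2 hσ2 pbar hpbar γs hγs r hr p q hp hq hfp hfq k)
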